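/- In the 2-firm, 4-worker market of Example 1 (preferences ≻_{f1}: w1,w2,w3,w4; ≻_{f2}: w4,w3,w2,w1; ≻_{w1}=≻_{w2}=≻_{w3}: f2,f1; ≻_{w4}: f1,f2; quotas q_{f1}=q_{f2}=2), the matchings μ_F with μ_F(f1)={w1,w2}, μ_F(f2)={w3,w4} and μ_W with μ_W(f1)={w1,w4}, μ_W(f2)={w2,w3} are both stable, and every convex combination α·x^{μ_F} + (1−α)·x^{μ_W} with α ∈ [0,1] is a strongly stable fractional matching. -/

import Mathlib

open Finset
open scoped Classical

/-- A many-to-one matching market: firms `F`, workers `W`, quotas `q`,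
strict preference relations of firms over individual workers and of workers
over firms, and acceptability predicates. -/
structure Market (F W : Type*) where
  q : F → ℕ
  qpos : ∀ f, 1 ≤ q f
  prefF : F → W → W → Prop
  prefW : W → F → F → Prop
  accF : F → W → Prop
  accW : W → F → Prop
  prefF_trans : ∀ f, Transitive (prefF f)
  prefF_irrefl : ∀ f w, ¬ prefF f w w
  prefF_total : ∀ f j w, j ≠ w → prefF f j w ∨ prefF f w j
  prefW_trans : ∀ w, Transitive (prefW w)
  prefW_irrefl : ∀ w f, ¬ prefW w f f
  prefW_total : ∀ w i f, i ≠ f → prefW w i f ∨ prefW w f i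

namespace Market

variable {F W : Type*} [Fintype F] [Fintype W] (M : Market F W)

def acceptable (f : F) (w : W) : Prop := M.accF f w ∧ M.accW w f

def weakF (f : F) (j w : W) : Prop := M.prefF f j w ∨ j = w

def weakW (w : W) (i f : F) : Prop := M.prefW w i f ∨ i = f

noncomputable def rowSumAbove (x : F → W → ℝ) (f : F) (w : W) : ℝ :=
  ∑ j ∈ univ.filter (fun j => M.weakF f j w), x f j

noncomputable def rowSumStrict (x : F → W → ℝ) (f : F) (w : W) : ℝ :=
  ∑ j ∈ univ.filter (fun j => M.prefF f j w), x f j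

noncomputable def colSumAbove (x : F → W → ℝ) (w : W) (f : F) : ℝ :=
  ∑ i ∈ univ.filter (fun i => M.weakW w i f), x i w

noncomputable def colSumStrict (x : F → W → ℝ) (w : W) (f : F) : ℝ :=
  ∑ i ∈ univ.filter (fun i => M.prefW w i f), x i w

/-- The SCP linear system: nonnegativity, firm capacity, worker capacity,
zero on unacceptable pairs, and the stability inequality on acceptable pairs. -/
def SCP (x : F → W → ℝ) : Prop :=
  (∀ f w, 0 ≤ x f w) ∧
  (∀ f, ∑ j, x f j ≤ (M.q f : ℝ)) ∧
  (∀ w, ∑ i, x i w ≤ 1) ∧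
  (∀ f w, ¬ M.acceptable f w → x f w = 0) ∧
  (∀ f w, M.acceptable f w →
    (M.q f : ℝ) ≤
      M.rowSumStrict x f w + (M.q f : ℝ) * M.colSumStrict x w f + (M.q f : ℝ) * x f w)

/-- The strong stability condition at a pair `(f, w)`. -/
def StrongCondAt (x : F → W → ℝ) (f : F) (w : W) : Prop :=
  ((M.q f : ℝ) - M.rowSumAbove x f w) * (1 - M.colSumAbove x w f) = 0

/-- A strongly stable fractional matching. -/
def StronglyStable (x : F → W → ℝ) : Prop :=
  M.SCP x ∧ ∀ f w, M.acceptable f w → M.StrongCondAt x f w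

def isMatching (μ : F → Finset W) : Prop :=
  (∀ f, (μ f).card ≤ M.q f) ∧ ∀ w f f', w ∈ μ f → w ∈ μ f' → f = f'

def indivRational (μ : F → Finset W) : Prop := ∀ f w, w ∈ μ f → M.acceptable f w

def blocks (μ : F → Finset W) (f : F) (w : W) : Prop :=
  w ∉ μ f ∧ M.acceptable f w ∧ (∀ f', w ∈ μ f' → M.prefW w f f') ∧
    ((μ f).card < M.q f ∨ ∃ w' ∈ μ f, M.prefF f w w')

def isStable (μ : F → Finset W) : Prop :=
  M.isMatching μ ∧ M.indivRational μ ∧ ∀ f w, ¬ M.blocks μ f w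

noncomputable def incidence (_m : Market F W) (μ : F → Finset W) : F → W → ℝ :=
  fun f w => if w ∈ μ f then 1 else 0

def firmWeakDom (x y : F → W → ℝ) (f : F) : Prop :=
  ∀ w, M.rowSumAbove y f w ≤ M.rowSumAbove x f w

/-- All firms weakly prefer `x` to `y`, at least one strictly. -/
def firmsPrefer (x y : F → W → ℝ) : Prop :=
  (∀ f, M.firmWeakDom x y f) ∧ ∃ f w, M.rowSumAbove y f w < M.rowSumAbove x f w

end Market

def exRF : Fin 2 → Fin 4 → ℕ := fun f w => if f = 0 then w.val else 3 - w.val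

def exRW : Fin 4 → Fin 2 → ℕ := fun w f => if w = 3 then f.val else 1 - f.val

/-- The market of Example 1: two firms with quota 2 and four workers. -/
def exMarket : Market (Fin 2) (Fin 4) where
  q := fun _ => 2
  qpos := fun _ => by norm_num
  prefF := fun f j w => exRF f j < exRF f w
  prefW := fun w i f => exRW w i < exRW w f
  accF := fun _ _ => True
  accW := fun _ _ => True
  prefF_trans := fun _ _ _ _ h1 h2 => lt_trans h1 h2
  prefF_irrefl := fun _ _ => lt_irrefl _
  prefF_total := by decide
  prefW_trans := fun _ _ _ _ h1 h2 => lt_trans h1 h2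
  prefW_irrefl := fun _ _ => lt_irrefl _
  prefW_total := by decide

def exMuF : Fin 2 → Finset (Fin 4) := fun f => if f = 0 then {0, 1} else {2, 3}

def exMuW : Fin 2 → Finset (Fin 4) := fun f => if f = 0 then {0, 3} else {1, 2}

/-- In the market of Example 1, `μ_F` and `μ_W` are stable, and every convex
combination of their incidence vectors is a strongly stable fractional matching. -/
theorem example_convex_combinations_strongly_stable :
    exMarket.isStable exMuF ∧ exMarket.isStable exMuW ∧
    ∀ α : ℝ, 0 ≤ α → α ≤ 1 →
      exMarket.StronglyStable
        (fun f w => α * exMarket.incidence exMuF f w +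
          (1 - α) * exMarket.incidence exMuW f w) := by
  have hfin4 : ∀ (w : Fin 4), ((w:ℕ) = 0 ∨ (w:ℕ) = 1 ∨ (w:ℕ) = 2 ∨ (w:ℕ) = 3) := by decide
  refine ⟨?_, ?_, ?_⟩
  · simp only [Market.isStable, Market.isMatching, Market.indivRational,
      Market.blocks, Market.acceptable, exMarket]
    decide
  · simp only [Market.isStable, Market.isMatching, Market.indivRational,
      Market.blocks, Market.acceptable, exMarket]
    decide
  intro α h0 h1
  refine ⟨⟨?_, ?_, ?_, ?_, ?_⟩, ?_⟩
  · intro f w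
    fin_cases f <;> fin_cases w <;>
      simp [Market.incidence, exMuF, exMuW] <;> nlinarith
  · intro f
    fin_cases f <;>
      simp [Market.incidence, exMuF, exMuW, exMarket, Fin.sum_univ_four] <;> nlinarith
  · intro w
    fin_cases w <;>
      simp [Market.incidence, exMuF, exMuW, Fin.sum_univ_two] <;> nlinarith
  · intro f w h
    exact absurd ⟨trivial, trivial⟩ h
  · intro f w _
    fin_cases f <;> fin_cases w <;>
      simp [Market.rowSumStrict, Market.colSumStrict, Market.incidence, exMarket,
        exMuF, exMuW, exRF, exRW, Finset.sum_filter, Fin.sum_univ_four,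
        Fin.sum_univ_two, Market.prefF, Market.prefW,
        show ((0:Fin 4):ℕ)=0 from rfl, show ((1:Fin 4):ℕ)=1 from rfl,
        show ((2:Fin 4):ℕ)=2 from rfl, show ((3:Fin 4):ℕ)=3 from rfl,
        show ((0:Fin 2):ℕ)=0 from rfl, show ((1:Fin 2):ℕ)=1 from rfl] <;>
      norm_num <;> first | nlinarith | (left; ring) | (right; ring)
  · intro f w _
    fin_cases f <;> fin_cases w <;>
      simp [Market.StrongCondAt, Market.rowSumAbove, Market.colSumAbove,
        Market.weakF, Market.weakW, Market.incidence, exMarket, exMuF, exMuW,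
        exRF, exRW, Finset.sum_filter, Fin.sum_univ_four, Fin.sum_univ_two,
        Market.prefF, Market.prefW, Fin.ext_iff, -Fin.val_eq_zero_iff,
        show ((0:Fin 4):ℕ)=0 from rfl, show ((1:Fin 4):ℕ)=1 from rfl,
        show ((2:Fin 4):ℕ)=2 from rfl, show ((3:Fin 4):ℕ)=3 from rfl,
        show ((0:Fin 2):ℕ)=0 from rfl, show ((1:Fin 2):ℕ)=1 from rfl] <;>
      norm_num <;> first | nlinarith | (left; ring) | (right; ring)
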